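/- Let I_1, …, I_n be half-open intervals I_i = [a_i, b_i) with a_i ≤ b_i forming a laminar family (for any two of the intervals, either they are disjoint or one is contained in the other), and let f : ℝ → ℝ be such that g(x) = f(x) − f(0) is sub-additive on the nonnegative reals, i.e., g(x+y) ≤ g(x) + g(y) for all x, y ≥ 0. Then every ordering α such that whenever I_i ⊊ I_j the index j appears before i in α has minimum cost among all orderings. -/

import Mathlib

open MeasureTheory

/-- The cost of an ordering `α` of the sets `S 1, …, S n`: sum over positions `k` of
`f` applied to the Lebesgue measure of the exposed part of the `k`-th set. -/
noncomputable def exposedCost {n : ℕ} (S : Fin n → Set ℝ) (f : ℝ → ℝ)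
    (α : Equiv.Perm (Fin n)) : ℝ :=
  ∑ k : Fin n, f ((volume (S (α k) \ ⋃ (j : Fin n) (_ : j < k), S (α j))).toReal)

namespace Stmt8Aux

/-- The exposed part of the `k`-th set in ordering `γ`. -/
def expPart {n : ℕ} (S : Fin n → Set ℝ) (γ : Equiv.Perm (Fin n)) (k : Fin n) : Set ℝ :=
  S (γ k) \ ⋃ (j : Fin n) (_ : j < k), S (γ j)

lemma exposedCost_eq {n : ℕ} (S : Fin n → Set ℝ) (f : ℝ → ℝ) (γ : Equiv.Perm (Fin n)) :
    exposedCost S f γ = ∑ k : Fin n, f ((volume (expPart S γ k)).toReal) := rfl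

lemma mem_expPart {n : ℕ} {S : Fin n → Set ℝ} {γ : Equiv.Perm (Fin n)} {k : Fin n} {x : ℝ} :
    x ∈ expPart S γ k ↔ x ∈ S (γ k) ∧ ∀ j, j < k → x ∉ S (γ j) := by
  simp only [expPart, Set.mem_diff, Set.mem_iUnion, not_exists]

lemma eq_of_mem_expPart {n : ℕ} {S : Fin n → Set ℝ} {γ : Equiv.Perm (Fin n)}
    {p q : Fin n} {x : ℝ} (hp : x ∈ expPart S γ p) (hq : x ∈ expPart S γ q) : p = q := by
  rw [mem_expPart] at hp hq
  rcases lt_trichotomy p q with h | h | h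
  · exact absurd hp.1 (hq.2 p h)
  · exact h
  · exact absurd hq.1 (hp.2 q h)

lemma measurableSet_expPart {n : ℕ} {S : Fin n → Set ℝ} (hmeas : ∀ l, MeasurableSet (S l))
    (γ : Equiv.Perm (Fin n)) (k : Fin n) : MeasurableSet (expPart S γ k) :=
  (hmeas _).diff (MeasurableSet.iUnion fun j => MeasurableSet.iUnion fun _ => hmeas _)

lemma volume_expPart_ne_top {n : ℕ} {S : Fin n → Set ℝ} (hfin : ∀ l, volume (S l) ≠ ⊤)
    (γ : Equiv.Perm (Fin n)) (k : Fin n) : volume (expPart S γ k) ≠ ⊤ :=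
  ne_top_of_le_ne_top (hfin (γ k)) (measure_mono Set.diff_subset)

lemma subadd_sum {f : ℝ → ℝ}
    (hsuper : ∀ x y : ℝ, 0 ≤ x → 0 ≤ y → f (x + y) - f 0 ≤ (f x - f 0) + (f y - f 0))
    {ι : Type*} [DecidableEq ι] (F : Finset ι) (y : ι → ℝ) (hy : ∀ i ∈ F, 0 ≤ y i) :
    f (∑ i ∈ F, y i) ≤ ∑ i ∈ F, f (y i) + (1 - (F.card : ℝ)) * f 0 := by
  induction F using Finset.induction_on with
  | empty => simp
  | insert j F' hj ih =>
    rw [Finset.sum_insert hj, Finset.sum_insert hj, Finset.card_insert_of_notMem hj]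
    have h1 : 0 ≤ y j := hy j (Finset.mem_insert_self _ _)
    have h2 : 0 ≤ ∑ i ∈ F', y i :=
      Finset.sum_nonneg fun i hi => hy i (Finset.mem_insert_of_mem hi)
    have h3 := hsuper (y j) (∑ i ∈ F', y i) h1 h2
    have h4 := ih fun i hi => hy i (Finset.mem_insert_of_mem hi)
    push_cast
    linarith

lemma main {n : ℕ} (S : Fin n → Set ℝ)
    (hmeas : ∀ l, MeasurableSet (S l)) (hfin : ∀ l, volume (S l) ≠ ⊤)
    (hlam : ∀ i j, S i ∩ S j = ∅ ∨ S i ⊆ S j ∨ S j ⊆ S i)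
    (f : ℝ → ℝ)
    (hsuper : ∀ x y : ℝ, 0 ≤ x → 0 ≤ y → f (x + y) - f 0 ≤ (f x - f 0) + (f y - f 0))
    (α : Equiv.Perm (Fin n))
    (hresp : ∀ i j, S i ⊂ S j → α.symm j < α.symm i)
    (β : Equiv.Perm (Fin n)) :
    exposedCost S f α ≤ exposedCost S f β := by
  classical
  -- `P i` : the earliest α-position whose set contains all of `S i`.
  have hPex : ∀ i : Fin n, (Finset.univ.filter fun p => S i ⊆ S (α p)).Nonempty :=
    fun i => ⟨α.symm i, by simp⟩
  set P : Fin n → Fin n :=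
    fun i => (Finset.univ.filter fun p => S i ⊆ S (α p)).min' (hPex i) with hP
  have hPsub : ∀ i, S i ⊆ S (α (P i)) := by
    intro i
    have := Finset.min'_mem _ (hPex i)
    simpa using this
  have hPmin : ∀ i p, S i ⊆ S (α p) → P i ≤ p := fun i p h =>
    Finset.min'_le _ _ (by simpa using h)
  -- Key: any point of `S i` is exposed by α exactly at position `P i`.
  have hA : ∀ i x, x ∈ S i → x ∈ expPart S α (P i) := by
    intro i x hx
    rw [mem_expPart]
    refine ⟨hPsub i hx, ?_⟩
    intro j hj hxj
    rcases hlam (α j) i with hd | hsub | hsup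
    · have : x ∈ S (α j) ∩ S i := ⟨hxj, hx⟩
      rw [hd] at this
      exact this
    · -- S (α j) ⊆ S i, so S (α j) ⊊ S (α (P i)), contradicting `hresp`
      have hne : S (α j) ≠ S (α (P i)) := by
        intro he
        have : S i ⊆ S (α j) := by rw [he]; exact hPsub i
        exact absurd (hPmin i j this) (not_le.2 hj)
      have hss : S (α j) ⊂ S (α (P i)) :=
        Set.ssubset_iff_subset_ne.2 ⟨hsub.trans (hPsub i), hne⟩
      have := hresp (α j) (α (P i)) hss
      simp only [Equiv.symm_apply_apply] at this
      exact absurd this (lt_asymm hj)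
    · exact absurd (hPmin i j hsup) (not_le.2 hj)
  -- every point of the union is exposed somewhere in β
  have hcov : ∀ (x : ℝ) (l : Fin n), x ∈ S l → ∃ k, x ∈ expPart S β k := by
    intro x l hx
    have hne : (Finset.univ.filter fun k => x ∈ S (β k)).Nonempty :=
      ⟨β.symm l, by simpa using hx⟩
    refine ⟨Finset.min' _ hne, ?_⟩
    rw [mem_expPart]
    constructor
    · have := Finset.min'_mem _ hne
      simpa using this
    · intro j hj hxj
      exact absurd (Finset.min'_le _ j (by simpa using hxj)) (not_le.2 hj)
  -- each β-piece lies inside a single α-piece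
  have hC : ∀ k, expPart S β k ⊆ expPart S α (P (β k)) := by
    intro k x hx
    exact hA (β k) x hx.1
  -- fibers
  set t : Fin n → Fin n := fun k => P (β k) with ht
  set fib : Fin n → Finset (Fin n) := fun m => Finset.univ.filter fun k => t k = m with hfib
  have hE : ∀ m, expPart S α m = ⋃ k ∈ fib m, expPart S β k := by
    intro m
    ext x
    constructor
    · intro hx
      obtain ⟨k, hk⟩ := hcov x (α m) hx.1
      have hxα := hC k hk
      have htk : t k = m := eq_of_mem_expPart hxα hx
      exact Set.mem_biUnion (Finset.mem_filter.2 ⟨Finset.mem_univ _, htk⟩) hk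
    · intro hx
      rw [Set.mem_iUnion₂] at hx
      obtain ⟨k, hk, hxk⟩ := hx
      have htk : t k = m := by simpa [hfib] using hk
      have hxα := hC k hxk
      have htk' : P (β k) = m := htk
      rwa [htk'] at hxα
  -- volumes add over fibers
  have hvol : ∀ m, volume (expPart S α m) = ∑ k ∈ fib m, volume (expPart S β k) := by
    intro m
    rw [hE m]
    refine measure_biUnion_finset ?_ fun k _ => measurableSet_expPart hmeas β k
    intro p _ q _ hpq
    exact Set.disjoint_left.2 fun {x} hx hx' => hpq (eq_of_mem_expPart hx hx')
  have hvolR : ∀ m, (volume (expPart S α m)).toReal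
      = ∑ k ∈ fib m, (volume (expPart S β k)).toReal := by
    intro m
    rw [hvol m, ENNReal.toReal_sum fun k _ => volume_expPart_ne_top hfin β k]
  -- the sum comparison
  rw [exposedCost_eq, exposedCost_eq]
  have hcard : ∑ m : Fin n, ((fib m).card : ℝ) = (n : ℝ) := by
    have := Finset.card_eq_sum_card_fiberwise
      (f := t) (s := Finset.univ) (t := Finset.univ) (fun x _ => Finset.mem_univ _)
    have h2 : (Finset.univ : Finset (Fin n)).card = ∑ m : Fin n, (fib m).card := this
    have := congrArg (fun z : ℕ => (z : ℝ)) h2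
    push_cast at this
    simpa using this.symm
  calc ∑ m : Fin n, f ((volume (expPart S α m)).toReal)
      = ∑ m : Fin n, f (∑ k ∈ fib m, (volume (expPart S β k)).toReal) := by
        exact Finset.sum_congr rfl fun m _ => by rw [hvolR m]
    _ ≤ ∑ m : Fin n, (∑ k ∈ fib m, f ((volume (expPart S β k)).toReal)
          + (1 - ((fib m).card : ℝ)) * f 0) :=
        Finset.sum_le_sum fun m _ =>
          subadd_sum hsuper _ _ fun k _ => ENNReal.toReal_nonneg
    _ = (∑ m : Fin n, ∑ k ∈ fib m, f ((volume (expPart S β k)).toReal))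
          + ∑ m : Fin n, (1 - ((fib m).card : ℝ)) * f 0 := by
        rw [Finset.sum_add_distrib]
    _ = ∑ k : Fin n, f ((volume (expPart S β k)).toReal) := by
        have h1 : ∑ m : Fin n, ∑ k ∈ fib m, f ((volume (expPart S β k)).toReal)
            = ∑ k : Fin n, f ((volume (expPart S β k)).toReal) :=
          Finset.sum_fiberwise_of_maps_to (fun x _ => Finset.mem_univ _) _
        have h2 : ∑ m : Fin n, (1 - ((fib m).card : ℝ)) * f 0 = 0 := by
          rw [← Finset.sum_mul]
          have : ∑ m : Fin n, (1 - ((fib m).card : ℝ)) = 0 := by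
            rw [Finset.sum_sub_distrib, hcard]
            simp
          rw [this, zero_mul]
        rw [h1, h2, add_zero]

end Stmt8Aux

theorem stmt_8 (n : ℕ) (a b : Fin n → ℝ) (hab : ∀ i, a i ≤ b i)
    (hlam : ∀ i j : Fin n,
      Set.Ico (a i) (b i) ∩ Set.Ico (a j) (b j) = ∅ ∨
      Set.Ico (a i) (b i) ⊆ Set.Ico (a j) (b j) ∨
      Set.Ico (a j) (b j) ⊆ Set.Ico (a i) (b i))
    (f : ℝ → ℝ)
    (hsuper : ∀ x y : ℝ, 0 ≤ x → 0 ≤ y →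
      f (x + y) - f 0 ≤ (f x - f 0) + (f y - f 0))
    (α : Equiv.Perm (Fin n))
    (hresp : ∀ i j : Fin n,
      Set.Ico (a i) (b i) ⊂ Set.Ico (a j) (b j) → α.symm j < α.symm i) :
    ∀ β : Equiv.Perm (Fin n),
      exposedCost (fun l => Set.Ico (a l) (b l)) f α ≤
      exposedCost (fun l => Set.Ico (a l) (b l)) f β := by
  intro β
  exact Stmt8Aux.main (fun l => Set.Ico (a l) (b l))
    (fun l => measurableSet_Ico)
    (fun l => by rw [Real.volume_Ico]; exact ENNReal.ofReal_ne_top)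
    hlam f hsuper α hresp β
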